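/- Let u_SY(t,x) = 4√2 (cosh(3x) + 3e^{8it}cosh(x)) / (cosh(4x) + 4cosh(2x) + 3cos(8t)) be the Satsuma–Yajima breather. Then for every t ∈ ℝ its mass, energy and momentum equal M[u_SY] = ∫_ℝ |u_SY(t,x)|² dx = 16, E[u_SY] = ∫_ℝ (|∂_x u_SY(t,x)|² - (1/2)|u_SY(t,x)|⁴) dx = -112/3, and P[u_SY] = Im ∫_ℝ ∂_x u_SY(t,x) · conj(u_SY(t,x)) dx = 0. -/

import Mathlib

open MeasureTheory Real Complex Function

/-- Denominator of the Satsuma–Yajima breather. -/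
noncomputable def denSY (t x : ℝ) : ℝ :=
  Real.cosh (4 * x) + 4 * Real.cosh (2 * x) + 3 * Real.cos (8 * t)

/-- The Satsuma–Yajima breather
`u_SY(t,x) = 4√2 (cosh(3x) + 3 e^{8it} cosh(x)) / (cosh(4x) + 4cosh(2x) + 3cos(8t))`. -/
noncomputable def uSY (t x : ℝ) : ℂ :=
  ((4 * Real.sqrt 2 : ℝ) : ℂ)
    * ((Real.cosh (3 * x) : ℝ)
        + 3 * Complex.exp (8 * Complex.I * (t : ℂ)) * ((Real.cosh x : ℝ) : ℂ))
    / ((denSY t x : ℝ) : ℂ)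

namespace SY

open Filter Topology

/-! ### Auxiliary real functions -/

noncomputable def dd (c x : ℝ) : ℝ := Real.cosh (4*x) + 4*Real.cosh (2*x) + 3*c
noncomputable def dp (x : ℝ) : ℝ := 4*Real.sinh (4*x) + 8*Real.sinh (2*x)
noncomputable def fS (c x : ℝ) : ℝ :=
  4*Real.sqrt 2*(Real.cosh (3*x) + 3*c*Real.cosh x)/dd c x
noncomputable def gS (c s x : ℝ) : ℝ := 4*Real.sqrt 2*(3*s*Real.cosh x)/dd c x
noncomputable def fd (c x : ℝ) : ℝ :=
  4*Real.sqrt 2*((3*Real.sinh (3*x) + 3*c*Real.sinh x)*dd c x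
    - (Real.cosh (3*x) + 3*c*Real.cosh x)*dp x)/(dd c x)^2
noncomputable def gd (c s x : ℝ) : ℝ :=
  4*Real.sqrt 2*(3*s*Real.sinh x*dd c x - 3*s*Real.cosh x*dp x)/(dd c x)^2
noncomputable def mM (c s x : ℝ) : ℝ := fS c x^2 + gS c s x^2
noncomputable def eE (c s x : ℝ) : ℝ :=
  fd c x^2 + gd c s x^2 - 1/2*(fS c x^2 + gS c s x^2)^2
noncomputable def FM (c x : ℝ) : ℝ := 2*dp x/dd c x
noncomputable def NE (c x : ℝ) : ℝ :=
  2*((-684+312*c-216*c^2)*Real.sinh (2*x) + (-333-480*c+108*c^2)*Real.sinh (4*x)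
    + (-662/3-216*c)*Real.sinh (6*x) + (-96-60*c)*Real.sinh (8*x)
    + (-30)*Real.sinh (10*x) + (-7/3)*Real.sinh (12*x))
noncomputable def NEd (c x : ℝ) : ℝ :=
  2*(2*(-684+312*c-216*c^2)*Real.cosh (2*x) + 4*(-333-480*c+108*c^2)*Real.cosh (4*x)
    + 6*(-662/3-216*c)*Real.cosh (6*x) + 8*(-96-60*c)*Real.cosh (8*x)
    + (-300)*Real.cosh (10*x) + (-28)*Real.cosh (12*x))
noncomputable def HE (c x : ℝ) : ℝ := NE c x/(dd c x)^3

/-! ### Elementary facts -/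

lemma exp_pows (x : ℝ) :
    Real.exp (2*x) = Real.exp x^2 ∧ Real.exp (3*x) = Real.exp x^3 ∧
    Real.exp (4*x) = Real.exp x^4 ∧ Real.exp (6*x) = Real.exp x^6 ∧
    Real.exp (8*x) = Real.exp x^8 ∧ Real.exp (10*x) = Real.exp x^10 ∧
    Real.exp (12*x) = Real.exp x^12 := by
  have h : ∀ n : ℕ, Real.exp ((n:ℝ)*x) = Real.exp x ^ n := fun n => Real.exp_nat_mul x n
  refine ⟨?_, ?_, ?_, ?_, ?_, ?_, ?_⟩
  · simpa using h 2
  · simpa using h 3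
  · simpa using h 4
  · simpa using h 6
  · simpa using h 8
  · simpa using h 10
  · simpa using h 12

lemma two_le_dd {c : ℝ} (hc : -1 ≤ c) (x : ℝ) : 2 ≤ dd c x := by
  have h1 := Real.one_le_cosh (4*x)
  have h2 := Real.one_le_cosh (2*x)
  unfold dd; nlinarith

lemma dd_pos {c : ℝ} (hc : -1 ≤ c) (x : ℝ) : 0 < dd c x :=
  lt_of_lt_of_le two_pos (two_le_dd hc x)

lemma dd_ne {c : ℝ} (hc : -1 ≤ c) (x : ℝ) : dd c x ≠ 0 := (dd_pos hc x).ne'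

lemma hasDerivAt_coshk (k x : ℝ) :
    HasDerivAt (fun y => Real.cosh (k*y)) (k*Real.sinh (k*x)) x := by
  have h1 : HasDerivAt (fun y : ℝ => k*y) k x := by
    simpa using (hasDerivAt_id x).const_mul k
  have h := (Real.hasDerivAt_cosh (k*x)).comp x h1
  simpa [Function.comp_def, mul_comm] using h

lemma hasDerivAt_sinhk (k x : ℝ) :
    HasDerivAt (fun y => Real.sinh (k*y)) (k*Real.cosh (k*x)) x := by
  have h1 : HasDerivAt (fun y : ℝ => k*y) k x := by
    simpa using (hasDerivAt_id x).const_mul k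
  have h := (Real.hasDerivAt_sinh (k*x)).comp x h1
  simpa [Function.comp_def, mul_comm] using h

lemma hasDerivAt_dd (c x : ℝ) : HasDerivAt (fun y => dd c y) (dp x) x := by
  unfold dd dp
  have h := ((hasDerivAt_coshk 4 x).add ((hasDerivAt_coshk 2 x).const_mul 4)).add_const (3*c)
  refine h.congr_deriv (Eq.symm ?_)
  ring

lemma hasDerivAt_dp (x : ℝ) :
    HasDerivAt dp (16*Real.cosh (4*x) + 16*Real.cosh (2*x)) x := by
  unfold dp
  have h := ((hasDerivAt_sinhk 4 x).const_mul 4).add ((hasDerivAt_sinhk 2 x).const_mul 8)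
  refine h.congr_deriv (Eq.symm ?_)
  ring

lemma hasDerivAt_fS {c : ℝ} (hc : -1 ≤ c) (x : ℝ) :
    HasDerivAt (fun y => fS c y) (fd c x) x := by
  have hnum : HasDerivAt (fun y => 4*Real.sqrt 2*(Real.cosh (3*y) + 3*c*Real.cosh y))
      (4*Real.sqrt 2*(3*Real.sinh (3*x) + 3*c*Real.sinh x)) x := by
    exact ((hasDerivAt_coshk 3 x).add
      ((Real.hasDerivAt_cosh x).const_mul (3*c))).const_mul (4*Real.sqrt 2)
  have h := hnum.div (hasDerivAt_dd c x) (dd_ne hc x)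
  unfold fS fd
  refine h.congr_deriv (Eq.symm ?_)
  ring

lemma hasDerivAt_gS {c s : ℝ} (hc : -1 ≤ c) (x : ℝ) :
    HasDerivAt (fun y => gS c s y) (gd c s x) x := by
  have hnum : HasDerivAt (fun y => 4*Real.sqrt 2*(3*s*Real.cosh y))
      (4*Real.sqrt 2*(3*s*Real.sinh x)) x := by
    exact (((Real.hasDerivAt_cosh x).const_mul (3*s)).const_mul (4*Real.sqrt 2))
  have h := hnum.div (hasDerivAt_dd c x) (dd_ne hc x)
  unfold gS gd
  refine h.congr_deriv (Eq.symm ?_)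
  ring

/-! ### Key algebraic identities -/

lemma key_mass (c x : ℝ) :
    2*(16*Real.cosh (4*x) + 16*Real.cosh (2*x))*dd c x - 2*dp x*dp x
      = 32*(Real.cosh (3*x)+3*c*Real.cosh x)^2 + 288*(1-c^2)*Real.cosh x^2 := by
  obtain ⟨h2,h3,h4,h6,h8,h10,h12⟩ := exp_pows x
  unfold dd dp
  simp only [Real.cosh_eq, Real.sinh_eq, Real.exp_neg, h2, h3, h4]
  have hE := Real.exp_ne_zero x
  field_simp
  ring

lemma key_energy (c x : ℝ) :
    NEd c x * dd c x - 3*NE c x*dp x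
      = 32*((3*Real.sinh (3*x)+3*c*Real.sinh x)*dd c x
            - (Real.cosh (3*x)+3*c*Real.cosh x)*dp x)^2
        + 288*(1-c^2)*(Real.sinh x*dd c x - Real.cosh x*dp x)^2
        - 512*((Real.cosh (3*x)+3*c*Real.cosh x)^2 + 9*(1-c^2)*Real.cosh x^2)^2 := by
  obtain ⟨h2,h3,h4,h6,h8,h10,h12⟩ := exp_pows x
  unfold NEd NE dd dp
  simp only [Real.cosh_eq, Real.sinh_eq, Real.exp_neg, h2, h3, h4, h6, h8, h10, h12]
  have hE := Real.exp_ne_zero x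
  field_simp
  ring

/-! ### Derivatives of the antiderivatives -/

lemma hasDerivAt_FM {c s : ℝ} (hc : -1 ≤ c) (hs : s^2 = 1 - c^2) (x : ℝ) :
    HasDerivAt (fun y => FM c y) (mM c s x) x := by
  have h := ((hasDerivAt_dp x).const_mul 2).div (hasDerivAt_dd c x) (dd_ne hc x)
  unfold FM mM
  refine h.congr_deriv (Eq.symm ?_)
  have hsq : Real.sqrt 2^2 = 2 := Real.sq_sqrt (by norm_num)
  have hdne := dd_ne hc x
  have hf2 : fS c x^2 = 32*(Real.cosh (3*x)+3*c*Real.cosh x)^2/(dd c x)^2 := by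
    unfold fS; rw [div_pow, mul_pow, mul_pow, hsq]; ring
  have hg2 : gS c s x^2 = 288*(1-c^2)*Real.cosh x^2/(dd c x)^2 := by
    unfold gS; rw [← hs, div_pow, mul_pow, mul_pow, hsq]; ring
  rw [hf2, hg2, ← add_div,
    div_eq_div_iff (pow_ne_zero 2 hdne) (pow_ne_zero 2 hdne)]
  linear_combination (-(dd c x)^2) * key_mass c x

lemma hasDerivAt_NE (c x : ℝ) : HasDerivAt (fun y => NE c y) (NEd c x) x := by
  unfold NE NEd
  have h := ((((((hasDerivAt_sinhk 2 x).const_mul (-684+312*c-216*c^2)).add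
      ((hasDerivAt_sinhk 4 x).const_mul (-333-480*c+108*c^2))).add
      ((hasDerivAt_sinhk 6 x).const_mul (-662/3-216*c))).add
      ((hasDerivAt_sinhk 8 x).const_mul (-96-60*c))).add
      ((hasDerivAt_sinhk 10 x).const_mul (-30))).add
      ((hasDerivAt_sinhk 12 x).const_mul (-7/3))
  have h2 := h.const_mul 2
  refine h2.congr_deriv (Eq.symm ?_)
  ring

lemma eE_frac {c s : ℝ} (hc : -1 ≤ c) (hs : s^2 = 1 - c^2) (x : ℝ) :
    eE c s x
      = (32*((3*Real.sinh (3*x)+3*c*Real.sinh x)*dd c x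
            - (Real.cosh (3*x)+3*c*Real.cosh x)*dp x)^2
        + 288*(1-c^2)*(Real.sinh x*dd c x - Real.cosh x*dp x)^2
        - 512*((Real.cosh (3*x)+3*c*Real.cosh x)^2 + 9*(1-c^2)*Real.cosh x^2)^2)
        /(dd c x)^4 := by
  have hsq : Real.sqrt 2^2 = 2 := Real.sq_sqrt (by norm_num)
  have hdne := dd_ne hc x
  have hf2 : fS c x^2 = 32*(Real.cosh (3*x)+3*c*Real.cosh x)^2/(dd c x)^2 := by
    unfold fS; rw [div_pow, mul_pow, mul_pow, hsq]; ring
  have hg2 : gS c s x^2 = 288*(1-c^2)*Real.cosh x^2/(dd c x)^2 := by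
    unfold gS; rw [← hs, div_pow, mul_pow, mul_pow, hsq]; ring
  have hfd2 : fd c x^2 = 32*((3*Real.sinh (3*x)+3*c*Real.sinh x)*dd c x
      - (Real.cosh (3*x)+3*c*Real.cosh x)*dp x)^2/(dd c x)^4 := by
    unfold fd; rw [div_pow, mul_pow, mul_pow, hsq]; ring
  have hgd2 : gd c s x^2 = 288*(1-c^2)*(Real.sinh x*dd c x - Real.cosh x*dp x)^2
      /(dd c x)^4 := by
    unfold gd; rw [← hs, div_pow, mul_pow, mul_pow, hsq]; ring
  unfold eE
  rw [hf2, hg2, hfd2, hgd2]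
  field_simp
  ring

lemma hasDerivAt_HE {c s : ℝ} (hc : -1 ≤ c) (hs : s^2 = 1 - c^2) (x : ℝ) :
    HasDerivAt (fun y => HE c y) (eE c s x) x := by
  have hdne := dd_ne hc x
  have hdd3 : HasDerivAt (fun y => (dd c y)^3) (3*(dd c x)^2*dp x) x := by
    have h := (hasDerivAt_dd c x).pow 3
    refine h.congr_deriv (Eq.symm ?_) <;> (try push_cast) <;> (try ring)
  have h := (hasDerivAt_NE c x).div hdd3 (pow_ne_zero 3 hdne)
  unfold HE
  refine h.congr_deriv (Eq.symm ?_)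
  rw [eE_frac hc hs x,
    div_eq_div_iff (pow_ne_zero 4 hdne) (pow_ne_zero 2 (pow_ne_zero 3 hdne))]
  linear_combination (-(dd c x)^6) * key_energy c x

/-! ### Limits at infinity -/

lemma tendsto_exp_neg_two : Tendsto (fun x : ℝ => Real.exp (-(2*x))) atTop (𝓝 0) := by
  have h0 : Tendsto (fun x : ℝ => Real.exp (-x)) atTop (𝓝 0) :=
    Real.tendsto_exp_neg_atTop_nhds_zero
  have h1 := h0.pow 2
  have h2 : ∀ x : ℝ, Real.exp (-x)^2 = Real.exp (-(2*x)) := fun x => by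
    rw [sq, ← Real.exp_add]; ring_nf
  simpa [h2] using h1

lemma rep_den_eq {c : ℝ} (x : ℝ) :
    1 + 4*Real.exp (-(2*x)) + 6*c*Real.exp (-(2*x))^2 + 4*Real.exp (-(2*x))^3
      + Real.exp (-(2*x))^4 = 2*Real.exp (-(2*x))^2 * dd c x := by
  obtain ⟨h2,h3,h4,h6,h8,h10,h12⟩ := exp_pows x
  unfold dd
  simp only [Real.cosh_eq, Real.exp_neg, h2, h4]
  have hE := Real.exp_ne_zero x
  field_simp
  ring

lemma rep_den_pos {c : ℝ} (hc : -1 ≤ c) (x : ℝ) :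
    0 < 1 + 4*Real.exp (-(2*x)) + 6*c*Real.exp (-(2*x))^2 + 4*Real.exp (-(2*x))^3
      + Real.exp (-(2*x))^4 := by
  rw [rep_den_eq x]
  have h1 : 0 < 2*Real.exp (-(2*x))^2 := by positivity
  exact mul_pos h1 (dd_pos hc x)

lemma tendsto_FM {c : ℝ} (hc : -1 ≤ c) : Tendsto (fun x => FM c x) atTop (𝓝 8) := by
  have hrep : ∀ x : ℝ, FM c x =
      (8 - 8*Real.exp (-(2*x))^4 + 16*Real.exp (-(2*x)) - 16*Real.exp (-(2*x))^3) /
      (1 + 4*Real.exp (-(2*x)) + 6*c*Real.exp (-(2*x))^2 + 4*Real.exp (-(2*x))^3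
        + Real.exp (-(2*x))^4) := by
    intro x
    unfold FM
    rw [div_eq_div_iff (dd_ne hc x) (rep_den_pos hc x).ne']
    obtain ⟨h2,h3,h4,h6,h8,h10,h12⟩ := exp_pows x
    unfold dd dp
    simp only [Real.cosh_eq, Real.sinh_eq, Real.exp_neg, h2, h4]
    have hE := Real.exp_ne_zero x
    field_simp
    ring
  have hcont : ContinuousAt (fun z : ℝ =>
      (8 - 8*z^4 + 16*z - 16*z^3)/(1 + 4*z + 6*c*z^2 + 4*z^3 + z^4)) 0 := by
    apply ContinuousAt.div (by fun_prop) (by fun_prop)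
    norm_num
  have h := hcont.tendsto.comp tendsto_exp_neg_two
  simp only [Function.comp_def] at h
  have h2 := Tendsto.congr (fun x => (hrep x).symm) h
  convert h2 using 2
  norm_num

lemma tendsto_HE {c : ℝ} (hc : -1 ≤ c) :
    Tendsto (fun x => HE c x) atTop (𝓝 (-56/3)) := by
  have hrep : ∀ x : ℝ, HE c x =
      (8*((-684+312*c-216*c^2)*(Real.exp (-(2*x))^5 - Real.exp (-(2*x))^7)
        + (-333-480*c+108*c^2)*(Real.exp (-(2*x))^4 - Real.exp (-(2*x))^8)
        + (-662/3-216*c)*(Real.exp (-(2*x))^3 - Real.exp (-(2*x))^9)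
        + (-96-60*c)*(Real.exp (-(2*x))^2 - Real.exp (-(2*x))^10)
        + (-30)*(Real.exp (-(2*x)) - Real.exp (-(2*x))^11)
        + (-7/3)*(1 - Real.exp (-(2*x))^12))) /
      (1 + 4*Real.exp (-(2*x)) + 6*c*Real.exp (-(2*x))^2 + 4*Real.exp (-(2*x))^3
        + Real.exp (-(2*x))^4)^3 := by
    intro x
    unfold HE
    rw [div_eq_div_iff (pow_ne_zero 3 (dd_ne hc x)) (pow_ne_zero 3 (rep_den_pos hc x).ne')]
    obtain ⟨h2,h3,h4,h6,h8,h10,h12⟩ := exp_pows x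
    unfold NE dd
    simp only [Real.cosh_eq, Real.sinh_eq, Real.exp_neg, h2, h4, h6, h8, h10, h12]
    have hE := Real.exp_ne_zero x
    field_simp
    ring
  have hcont : ContinuousAt (fun z : ℝ =>
      (8*((-684+312*c-216*c^2)*(z^5 - z^7) + (-333-480*c+108*c^2)*(z^4 - z^8)
        + (-662/3-216*c)*(z^3 - z^9) + (-96-60*c)*(z^2 - z^10)
        + (-30)*(z - z^11) + (-7/3)*(1 - z^12))) /
      (1 + 4*z + 6*c*z^2 + 4*z^3 + z^4)^3) 0 := by
    apply ContinuousAt.div (by fun_prop) (by fun_prop)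
    norm_num
  have h := hcont.tendsto.comp tendsto_exp_neg_two
  simp only [Function.comp_def] at h
  have h2 := Tendsto.congr (fun x => (hrep x).symm) h
  convert h2 using 2
  norm_num

/-! ### Evenness -/

lemma fS_neg (c x : ℝ) : fS c (-x) = fS c x := by
  unfold fS dd
  simp [mul_neg, Real.cosh_neg]

lemma gS_neg (c s x : ℝ) : gS c s (-x) = gS c s x := by
  unfold gS dd
  simp [mul_neg, Real.cosh_neg]

lemma fd_neg (c x : ℝ) : fd c (-x) = -fd c x := by
  unfold fd dd dp
  simp only [mul_neg, Real.cosh_neg, Real.sinh_neg]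
  ring

lemma gd_neg (c s x : ℝ) : gd c s (-x) = -gd c s x := by
  unfold gd dd dp
  simp only [mul_neg, Real.cosh_neg, Real.sinh_neg]
  ring

lemma mM_neg (c s x : ℝ) : mM c s (-x) = mM c s x := by
  unfold mM; rw [fS_neg, gS_neg]

lemma eE_neg (c s x : ℝ) : eE c s (-x) = eE c s x := by
  unfold eE; rw [fS_neg, gS_neg, fd_neg, gd_neg]; ring

lemma even_integral {f : ℝ → ℝ} (hf : ∀ x, f (-x) = f x) :
    ∫ x, f x = 2*∫ x in Set.Ioi (0:ℝ), f x := by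
  rw [← integral_comp_abs (f := f)]
  congr 1
  funext x
  rcases le_total 0 x with h|h
  · rw [_root_.abs_of_nonneg h]
  · rw [_root_.abs_of_nonpos h, hf]

/-! ### Bound for integrability of the energy density -/

lemma abs_sinh_le_cosh (y : ℝ) : |Real.sinh y| ≤ Real.cosh y := by
  rw [abs_le, Real.sinh_eq, Real.cosh_eq]
  constructor <;> nlinarith [Real.exp_pos y, Real.exp_pos (-y)]

lemma cosh_le_exp {y : ℝ} (hy : 0 ≤ y) : Real.cosh y ≤ Real.exp y := by
  rw [Real.cosh_eq]
  have h := Real.exp_le_exp.mpr (neg_le_self hy)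
  linarith [Real.exp_pos y]

lemma abs_dp_le {c : ℝ} (hc : -1 ≤ c) (x : ℝ) : |dp x| ≤ 6*dd c x := by
  have h4 := abs_sinh_le_cosh (4*x)
  have h2 := abs_sinh_le_cosh (2*x)
  have h14 := Real.one_le_cosh (4*x)
  have h12 := Real.one_le_cosh (2*x)
  rw [abs_le] at h4 h2 ⊢
  unfold dd dp
  constructor <;> nlinarith

lemma dd_lower {c : ℝ} (hc : -1 ≤ c) (x : ℝ) : Real.exp x^4 ≤ 2*dd c x := by
  have h12 := Real.one_le_cosh (2*x)
  have h4 : Real.exp (4*x) ≤ 2*Real.cosh (4*x) := by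
    rw [Real.cosh_eq]; have := (Real.exp_pos (-(4*x))).le; linarith
  obtain ⟨hp2,hp3,hp4,hp6,hp8,hp10,hp12⟩ := exp_pows x
  rw [← hp4]
  unfold dd
  nlinarith

set_option maxHeartbeats 1000000 in
lemma eE_bound {c s : ℝ} (hc : -1 ≤ c) (hc2 : c ≤ 1) (hs : s^2 = 1 - c^2) {x : ℝ}
    (hx : 0 ≤ x) : |eE c s x| ≤ 10^8 * Real.exp (-2*x) := by
  obtain ⟨hp2,hp3,hp4,hp6,hp8,hp10,hp12⟩ := exp_pows x
  set P := Real.exp x with hP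
  have hP1 : 1 ≤ P := Real.one_le_exp hx
  have hPpos : 0 < P := Real.exp_pos x
  have hP3 : (0:ℝ) < P^3 := by positivity
  have hd := dd_pos hc x
  have hdl := dd_lower hc x
  have hdp := abs_dp_le hc x
  have hPP3 : P ≤ P^3 := by
    have h9 : 1 ≤ P^2 := by nlinarith
    calc P = P*1 := by ring
      _ ≤ P*P^2 := mul_le_mul_of_nonneg_left h9 hPpos.le
      _ = P^3 := by ring
  have hb : Real.cosh x ≤ P^3 := by
    have h1 : Real.cosh x ≤ Real.exp x := cosh_le_exp hx
    linarith
  have ha : Real.cosh (3*x) ≤ P^3 := by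
    have h1 : Real.cosh (3*x) ≤ Real.exp (3*x) := cosh_le_exp (by linarith)
    rw [hp3] at h1; exact h1
  have hsb : |Real.sinh x| ≤ P^3 := (abs_sinh_le_cosh x).trans hb
  have hsa : |Real.sinh (3*x)| ≤ P^3 := (abs_sinh_le_cosh (3*x)).trans ha
  have hbpos : 0 < Real.cosh x := Real.cosh_pos x
  have hapos : 0 < Real.cosh (3*x) := Real.cosh_pos (3*x)
  have hcabs : |c| ≤ 1 := abs_le.mpr ⟨hc, hc2⟩
  have habs : ∀ y z : ℝ, |y| ≤ z → y^2 ≤ z^2 := fun y z h => by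
    rw [← _root_.sq_abs y]
    exact pow_le_pow_left₀ (abs_nonneg _) h 2
  have hcc : 0 ≤ 1 - c^2 := by
    have h := habs c 1 hcabs; nlinarith
  have hcc1 : 1 - c^2 ≤ 1 := by nlinarith [sq_nonneg c]
  set d := dd c x with hdd
  set A1 := (3*Real.sinh (3*x)+3*c*Real.sinh x)*d
      - (Real.cosh (3*x)+3*c*Real.cosh x)*dp x with hA1
  set B1 := Real.sinh x*d - Real.cosh x*dp x with hB1
  set X2 := (Real.cosh (3*x)+3*c*Real.cosh x)^2 + 9*(1-c^2)*Real.cosh x^2 with hX2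
  have habs3 : |(3:ℝ)| = 3 := _root_.abs_of_nonneg (by norm_num)
  have hcsh : |c*Real.sinh x| ≤ P^3 := by
    rw [_root_.abs_mul]
    calc |c| * |Real.sinh x| ≤ 1*P^3 :=
      mul_le_mul hcabs hsb (abs_nonneg _) zero_le_one
    _ = P^3 := by ring
  have hcch : |c*Real.cosh x| ≤ P^3 := by
    rw [_root_.abs_mul]
    calc |c| * |Real.cosh x| ≤ 1*P^3 :=
      mul_le_mul hcabs (by rwa [_root_.abs_of_pos hbpos]) (abs_nonneg _) zero_le_one
    _ = P^3 := by ring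
  have hX : |Real.cosh (3*x)+3*c*Real.cosh x| ≤ 4*P^3 := by
    calc |Real.cosh (3*x)+3*c*Real.cosh x|
        ≤ |Real.cosh (3*x)| + |3*(c*Real.cosh x)| := by
          rw [show 3*c*Real.cosh x = 3*(c*Real.cosh x) by ring]
          exact abs_add_le _ _
      _ = Real.cosh (3*x) + 3*|c*Real.cosh x| := by
          rw [_root_.abs_of_pos hapos, _root_.abs_mul, habs3]
      _ ≤ 4*P^3 := by linarith
  have hA1a : |A1| ≤ 30*P^3*d := by
    have h1 : |(3*Real.sinh (3*x)+3*c*Real.sinh x)*d| ≤ 6*P^3*d := by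
      rw [_root_.abs_mul, _root_.abs_of_pos hd]
      have h2 : |3*Real.sinh (3*x)+3*c*Real.sinh x| ≤ 6*P^3 := by
        calc |3*Real.sinh (3*x)+3*c*Real.sinh x|
            ≤ |3*Real.sinh (3*x)| + |3*(c*Real.sinh x)| := by
              rw [show 3*c*Real.sinh x = 3*(c*Real.sinh x) by ring]
              exact abs_add_le _ _
          _ = 3*|Real.sinh (3*x)| + 3*|c*Real.sinh x| := by
              rw [_root_.abs_mul, _root_.abs_mul, habs3]
          _ ≤ 6*P^3 := by linarith
      exact mul_le_mul_of_nonneg_right h2 hd.le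
    have h2 : |(Real.cosh (3*x)+3*c*Real.cosh x)*dp x| ≤ 4*P^3*(6*d) := by
      rw [_root_.abs_mul]
      exact mul_le_mul hX hdp (abs_nonneg _) (by positivity)
    calc |A1| ≤ |(3*Real.sinh (3*x)+3*c*Real.sinh x)*d|
          + |(Real.cosh (3*x)+3*c*Real.cosh x)*dp x| := abs_sub _ _
      _ ≤ 30*P^3*d := by linarith
  have hA1b : A1^2 ≤ 900*P^6*d^2 := by
    calc A1^2 ≤ (30*P^3*d)^2 := habs _ _ hA1a
      _ = 900*P^6*d^2 := by ring
  have hB1a : |B1| ≤ 7*P^3*d := by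
    have h1 : |Real.sinh x*d| ≤ P^3*d := by
      rw [_root_.abs_mul, _root_.abs_of_pos hd]
      exact mul_le_mul_of_nonneg_right hsb hd.le
    have h2 : |Real.cosh x*dp x| ≤ P^3*(6*d) := by
      rw [_root_.abs_mul]
      exact mul_le_mul (by rwa [_root_.abs_of_pos hbpos]) hdp (abs_nonneg _) hP3.le
    calc |B1| ≤ |Real.sinh x*d| + |Real.cosh x*dp x| := abs_sub _ _
      _ ≤ 7*P^3*d := by linarith
  have hB1b : B1^2 ≤ 49*P^6*d^2 := by
    calc B1^2 ≤ (7*P^3*d)^2 := habs _ _ hB1a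
      _ = 49*P^6*d^2 := by ring
  have hX2b : X2 ≤ 25*P^6 := by
    have h1 : (Real.cosh (3*x)+3*c*Real.cosh x)^2 ≤ 16*P^6 := by
      calc (Real.cosh (3*x)+3*c*Real.cosh x)^2 ≤ (4*P^3)^2 := habs _ _ hX
        _ = 16*P^6 := by ring
    have h2 : 9*(1-c^2)*Real.cosh x^2 ≤ 9*P^6 := by
      have h3 : Real.cosh x^2 ≤ P^6 := by
        calc Real.cosh x^2 ≤ (P^3)^2 := by
              exact pow_le_pow_left₀ hbpos.le hb 2
          _ = P^6 := by ring
      have h4 : (1-c^2)*Real.cosh x^2 ≤ Real.cosh x^2 :=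
        mul_le_of_le_one_left (sq_nonneg _) hcc1
      linarith
    rw [hX2]; linarith
  have hX2pos : 0 ≤ X2 := by
    rw [hX2]; positivity
  have hX22 : X2^2 ≤ 625*P^12 := by
    calc X2^2 ≤ (25*P^6)^2 := pow_le_pow_left₀ hX2pos hX2b 2
      _ = 625*P^12 := by ring
  have hnum : |32*A1^2 + 288*(1-c^2)*B1^2 - 512*X2^2|
      ≤ 42912*P^6*d^2 + 320000*P^12 := by
    have e1 : (1-c^2)*B1^2 ≤ B1^2 := mul_le_of_le_one_left (sq_nonneg B1) hcc1
    have e2 : 0 ≤ (1-c^2)*B1^2 := mul_nonneg hcc (sq_nonneg B1)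
    have e3 : 0 ≤ X2^2 := sq_nonneg X2
    have e4 : 0 ≤ A1^2 := sq_nonneg A1
    have e5 : 0 ≤ P^6*d^2 := by positivity
    have e6 : 0 ≤ P^12 := by positivity
    rw [abs_le]
    constructor
    · linarith
    · linarith
  have e1 : P^8 ≤ 4*d^2 := by
    calc P^8 = (P^4)^2 := by ring
      _ ≤ (2*d)^2 := pow_le_pow_left₀ (by positivity) hdl 2
      _ = 4*d^2 := by ring
  have e2 : P^16 ≤ 16*d^4 := by
    calc P^16 = (P^8)^2 := by ring
      _ ≤ (4*d^2)^2 := pow_le_pow_left₀ (by positivity) e1 2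
      _ = 16*d^4 := by ring
  have t1 : 42912*P^6*d^2*P^2 ≤ 171648*d^4 := by
    have h1 : P^8*d^2 ≤ 4*d^2*d^2 := mul_le_mul_of_nonneg_right e1 (sq_nonneg d)
    calc 42912*P^6*d^2*P^2 = 42912*(P^8*d^2) := by ring
      _ ≤ 42912*(4*d^2*d^2) := by linarith
      _ = 171648*d^4 := by ring
  have t2 : 320000*P^12*P^2 ≤ 5120000*d^4 := by
    have h1 : P^14 ≤ P^16 := pow_le_pow_right₀ hP1 (by norm_num)
    calc 320000*P^12*P^2 = 320000*P^14 := by ring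
      _ ≤ 320000*P^16 := by linarith
      _ ≤ 320000*(16*d^4) := by linarith
      _ = 5120000*d^4 := by ring
  have hfin : (42912*P^6*d^2 + 320000*P^12) * P^2 ≤ 10^8 * d^4 := by
    have hd4 : 0 ≤ d^4 := by positivity
    calc (42912*P^6*d^2 + 320000*P^12) * P^2
        = 42912*P^6*d^2*P^2 + 320000*P^12*P^2 := by ring
      _ ≤ 171648*d^4 + 5120000*d^4 := by linarith
      _ ≤ 10^8 * d^4 := by linarith
  have hexp : Real.exp (-2*x) = (P^2)⁻¹ := by
    rw [show (-2:ℝ)*x = -(2*x) by ring, Real.exp_neg, hp2]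
  rw [eE_frac hc hs x, ← hdd, ← hA1, ← hB1, ← hX2, abs_div,
    _root_.abs_of_pos (pow_pos hd 4), hexp, div_le_iff₀ (pow_pos hd 4)]
  have hinv : (10:ℝ)^8*(P^2)⁻¹*d^4 = 10^8*d^4/P^2 := by ring
  rw [hinv, le_div_iff₀ (pow_pos hPpos 2)]
  calc |32*A1^2 + 288*(1-c^2)*B1^2 - 512*X2^2| * P^2
      ≤ (42912*P^6*d^2 + 320000*P^12) * P^2 :=
        mul_le_mul_of_nonneg_right hnum (pow_pos hPpos 2).le
    _ ≤ 10^8 * d^4 := hfin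

/-! ### Continuity -/

lemma cont_dd (c : ℝ) : Continuous (fun x => dd c x) := by
  unfold dd; fun_prop

lemma cont_eE {c s : ℝ} (hc : -1 ≤ c) : Continuous (fun x => eE c s x) := by
  have hdc := cont_dd c
  have hdp : Continuous dp := by unfold dp; fun_prop
  have hne : ∀ x, dd c x ≠ 0 := dd_ne hc
  have h1 : Continuous (fun x => fS c x) := by
    unfold fS; exact (by fun_prop : Continuous fun x =>
      4*Real.sqrt 2*(Real.cosh (3*x) + 3*c*Real.cosh x)).div hdc hne
  have h2 : Continuous (fun x => gS c s x) := by
    unfold gS; exact (by fun_prop : Continuous fun x =>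
      4*Real.sqrt 2*(3*s*Real.cosh x)).div hdc hne
  have h3 : Continuous (fun x => fd c x) := by
    unfold fd
    exact Continuous.div (by fun_prop) (hdc.pow 2) (fun x => pow_ne_zero 2 (hne x))
  have h4 : Continuous (fun x => gd c s x) := by
    unfold gd
    exact Continuous.div (by fun_prop) (hdc.pow 2) (fun x => pow_ne_zero 2 (hne x))
  unfold eE
  fun_prop

/-! ### Complex representation -/

lemma uSY_rep (t x : ℝ) :
    uSY t x = ((fS (Real.cos (8*t)) x : ℝ) : ℂ)
      + ((gS (Real.cos (8*t)) (Real.sin (8*t)) x : ℝ) : ℂ) * Complex.I := by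
  have hdpos := dd_pos (Real.neg_one_le_cos (8*t)) x
  have hden : denSY t x = dd (Real.cos (8*t)) x := rfl
  have hd : ((dd (Real.cos (8*t)) x : ℝ) : ℂ) ≠ 0 :=
    Complex.ofReal_ne_zero.mpr hdpos.ne'
  have he : Complex.exp (8 * Complex.I * (t:ℂ))
      = ((Real.cos (8*t) : ℝ) : ℂ) + ((Real.sin (8*t) : ℝ) : ℂ)*Complex.I := by
    rw [show (8:ℂ) * Complex.I * (t:ℂ) = ((8*t : ℝ):ℂ) * Complex.I by push_cast; ring,
      Complex.exp_mul_I, ← Complex.ofReal_cos, ← Complex.ofReal_sin]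
  rw [uSY, he, hden]
  unfold fS gS
  push_cast
  field_simp
  ring

lemma uSY_hasDeriv (t x : ℝ) : HasDerivAt (fun y => uSY t y)
    (((fd (Real.cos (8*t)) x : ℝ) : ℂ)
      + ((gd (Real.cos (8*t)) (Real.sin (8*t)) x : ℝ) : ℂ)*Complex.I) x := by
  have hc1 := Real.neg_one_le_cos (8*t)
  have h1 := (hasDerivAt_fS hc1 x).ofReal_comp
  have h2 := ((hasDerivAt_gS (s := Real.sin (8*t)) hc1 x).ofReal_comp).mul_const Complex.I
  have h := h1.add h2
  have hrep : (fun y => uSY t y) = fun y => ((fS (Real.cos (8*t)) y : ℝ) : ℂ)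
      + ((gS (Real.cos (8*t)) (Real.sin (8*t)) y : ℝ) : ℂ)*Complex.I :=
    funext (uSY_rep t)
  rw [hrep]
  exact h

lemma norm_sq_rep (a b : ℝ) : ‖((a:ℝ):ℂ) + ((b:ℝ):ℂ)*Complex.I‖^2 = a^2 + b^2 := by
  rw [Complex.sq_norm, Complex.normSq_add_mul_I]

end SY

/-- **Mass, energy and momentum of the Satsuma–Yajima breather.**
For every time `t`: `M[u_SY] = 16`, `E[u_SY] = -112/3` and `P[u_SY] = 0`. -/
theorem satsuma_yajima_mass_energy_momentum :
    ∀ t : ℝ,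
      (∫ x : ℝ, ‖uSY t x‖ ^ 2) = 16 ∧
      (∫ x : ℝ, (‖deriv (fun y => uSY t y) x‖ ^ 2 - (1 / 2) * ‖uSY t x‖ ^ 4))
        = -112 / 3 ∧
      (∫ x : ℝ, deriv (fun y => uSY t y) x * (starRingEnd ℂ) (uSY t x)).im = 0 := by
  intro t
  set c := Real.cos (8*t) with hcdef
  set s := Real.sin (8*t) with hsdef
  have hc1 : -1 ≤ c := Real.neg_one_le_cos (8*t)
  have hc2 : c ≤ 1 := Real.cos_le_one (8*t)
  have hs : s^2 = 1 - c^2 := by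
    have := Real.sin_sq_add_cos_sq (8*t); rw [← hcdef, ← hsdef] at *; linarith
  have hnorm : ∀ x : ℝ, ‖uSY t x‖^2 = SY.mM c s x := by
    intro x
    rw [SY.uSY_rep t x, SY.norm_sq_rep]
    rfl
  have hder : ∀ x : ℝ, deriv (fun y => uSY t y) x
      = ((SY.fd c x : ℝ) : ℂ) + ((SY.gd c s x : ℝ) : ℂ)*Complex.I := fun x =>
    (SY.uSY_hasDeriv t x).deriv
  refine ⟨?_, ?_, ?_⟩
  · -- mass
    simp only [hnorm]
    rw [SY.even_integral (fun x => SY.mM_neg c s x)]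
    have h := integral_Ioi_of_hasDerivAt_of_nonneg' (a := 0)
      (g := fun y => SY.FM c y) (g' := fun y => SY.mM c s y)
      (fun x _ => SY.hasDerivAt_FM hc1 hs x)
      (fun x _ => by unfold SY.mM; positivity)
      (SY.tendsto_FM hc1)
    rw [h]
    have h0 : SY.FM c 0 = 0 := by
      unfold SY.FM SY.dp
      norm_num
    simp only [h0]
    norm_num
  · -- energy
    have hint : ∀ x : ℝ, ‖deriv (fun y => uSY t y) x‖^2 - 1/2*‖uSY t x‖^4
        = SY.eE c s x := by
      intro x
      have h4 : ‖uSY t x‖^4 = (‖uSY t x‖^2)^2 := by ring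
      rw [hder x, SY.norm_sq_rep, h4, hnorm x]
      rfl
    simp only [hint]
    rw [SY.even_integral (fun x => SY.eE_neg c s x)]
    have hintg : IntegrableOn (fun x => SY.eE c s x) (Set.Ioi (0:ℝ)) := by
      have hexp : IntegrableOn (fun x : ℝ => 10^8 * Real.exp (-2*x)) (Set.Ioi (0:ℝ)) :=
        (exp_neg_integrableOn_Ioi 0 (by norm_num : (0:ℝ) < 2)).const_mul _
      apply Integrable.mono' hexp
      · exact ((SY.cont_eE (s := s) hc1).aestronglyMeasurable).restrict
      · rw [ae_restrict_iff' measurableSet_Ioi]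
        refine ae_of_all _ (fun x hx => ?_)
        rw [Real.norm_eq_abs]
        exact SY.eE_bound hc1 hc2 hs (le_of_lt hx)
    have h := integral_Ioi_of_hasDerivAt_of_tendsto' (a := 0)
      (f := fun y => SY.HE c y) (f' := fun y => SY.eE c s y)
      (fun x _ => SY.hasDerivAt_HE hc1 hs x) hintg (SY.tendsto_HE hc1)
    rw [h]
    have h0 : SY.HE c 0 = 0 := by
      unfold SY.HE SY.NE
      norm_num
    simp only [h0]
    norm_num
  · -- momentum
    have hueven : (fun y => uSY t (-y)) = (fun y => uSY t y) := by
      funext y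
      rw [SY.uSY_rep t (-y), SY.uSY_rep t y, SY.fS_neg, SY.gS_neg]
    have hodd : ∀ x : ℝ, (deriv (fun y => uSY t y) (-x)) * (starRingEnd ℂ) (uSY t (-x))
        = -((deriv (fun y => uSY t y) x) * (starRingEnd ℂ) (uSY t x)) := by
      intro x
      have hde : deriv (fun y => uSY t y) (-x) = - deriv (fun y => uSY t y) x := by
        have h := deriv_comp_neg (f := fun y => uSY t y) (x := x)
        rw [hueven] at h
        rw [h, neg_neg]
      have hu : uSY t (-x) = uSY t x := congrFun hueven x
      rw [hde, hu]
      ring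
    set w : ℝ → ℂ := fun x => deriv (fun y => uSY t y) x * (starRingEnd ℂ) (uSY t x)
      with hw
    have hww : ∀ x : ℝ, w (-x) = -w x := fun x => hodd x
    have h1 : ∫ x : ℝ, w (-x) = ∫ x : ℝ, w x := integral_neg_eq_self w volume
    have h2 : ∫ x : ℝ, w (-x) = -∫ x : ℝ, w x := by
      simp only [hww]
      exact integral_neg _
    have h3 : (∫ x : ℝ, w x) = 0 := by
      have h4 := h1.symm.trans h2
      linear_combination ((1:ℂ)/2) * h4
    rw [h3]
    rfl
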